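/- arXiv:2003.10930 — 2 statements merged into one kernel-verified Lean document; each statement's English description precedes it below -/
import Mathlib

section
/- There exists a universal constant C > 0 such that for every measurable set E ⊂ ℝⁿ one has Φ(|b(E)|) ≤ C·γ(E), where γ is the standard Gaussian measure, b(E) the Gaussian barycenter of E, and Φ(ρ) = ρ/(1 + √(|log ρ|)). -/
open MeasureTheory Real

/-- The function `Φ(ρ) = ρ/(1 + √|log ρ|)`. -/
noncomputable def Phi (ρ : ℝ) : ℝ := ρ / (1 + Real.sqrt |Real.log ρ|)

/-- The Gaussian measure of a set `E ⊂ ℝⁿ`. -/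
noncomputable def gaussVol {n : ℕ} (E : Set (EuclideanSpace ℝ (Fin n))) : ℝ :=
  (2 * Real.pi) ^ (-(n : ℝ) / 2) * ∫ x in E, Real.exp (-‖x‖ ^ 2 / 2)

/-- The (non-renormalized) Gaussian barycenter of a set `E ⊂ ℝⁿ`. -/
noncomputable def gaussBary {n : ℕ} (E : Set (EuclideanSpace ℝ (Fin n))) :
    EuclideanSpace ℝ (Fin n) :=
  (2 * Real.pi) ^ (-(n : ℝ) / 2) • ∫ x in E, Real.exp (-‖x‖ ^ 2 / 2) • x

open scoped RealInnerProductSpace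

variable {n : ℕ}

lemma integrable_tilt (R : ℝ) (w : EuclideanSpace ℝ (Fin n)) :
    Integrable (fun x : EuclideanSpace ℝ (Fin n) => rexp (R * ⟪w, x⟫ - ‖x‖ ^ 2 / 2)) := by
  have h := (GaussianFourier.integrable_cexp_neg_mul_sq_norm_add
      (V := EuclideanSpace ℝ (Fin n)) (b := (1/2 : ℂ)) (by norm_num) (R : ℂ) w).re
  refine h.congr (Filter.Eventually.of_forall fun v => ?_)
  have harg : -(1/2 : ℂ) * (‖v‖ : ℂ) ^ 2 + (R : ℂ) * (⟪w, v⟫ : ℝ) =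
      ((R * ⟪w, v⟫ - ‖v‖ ^ 2 / 2 : ℝ) : ℂ) := by push_cast; ring
  simp only [harg, ← Complex.ofReal_exp, Complex.ofReal_re, RCLike.re_to_complex]

lemma integral_tilt (R : ℝ) (w : EuclideanSpace ℝ (Fin n)) :
    ∫ x : EuclideanSpace ℝ (Fin n), rexp (R * ⟪w, x⟫ - ‖x‖ ^ 2 / 2) =
      (2 * π) ^ ((n : ℝ) / 2) * rexp (R ^ 2 * ‖w‖ ^ 2 / 2) := by
  have h := GaussianFourier.integral_cexp_neg_mul_sq_norm_add
      (V := EuclideanSpace ℝ (Fin n)) (b := (1/2 : ℂ)) (by norm_num) (R : ℂ) w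
  have heq : ∀ v : EuclideanSpace ℝ (Fin n),
      Complex.exp (-(1/2 : ℂ) * (‖v‖ : ℂ) ^ 2 + (R : ℂ) * (⟪w, v⟫ : ℝ)) =
      ((rexp (R * ⟪w, v⟫ - ‖v‖ ^ 2 / 2) : ℝ) : ℂ) := by
    intro v
    have harg : -(1/2 : ℂ) * (‖v‖ : ℂ) ^ 2 + (R : ℂ) * (⟪w, v⟫ : ℝ) =
        ((R * ⟪w, v⟫ - ‖v‖ ^ 2 / 2 : ℝ) : ℂ) := by push_cast; ring
    rw [harg, Complex.ofReal_exp]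
  rw [show (fun v : EuclideanSpace ℝ (Fin n) => Complex.exp (-(1/2 : ℂ) * (‖v‖ : ℂ) ^ 2 + (R : ℂ) * (⟪w, v⟫ : ℝ))) = _ from funext heq] at h
  have hrank : (Module.finrank ℝ (EuclideanSpace ℝ (Fin n)) : ℂ) = (n : ℂ) := by
    simp [finrank_euclideanSpace_fin]
  rw [hrank] at h
  have hrhs : ((π : ℂ) / (1/2)) ^ ((n : ℂ) / 2) * Complex.exp ((R : ℂ) ^ 2 * (‖w‖ : ℂ) ^ 2 / (4 * (1/2))) =
      (((2 * π) ^ ((n : ℝ) / 2) * rexp (R ^ 2 * ‖w‖ ^ 2 / 2) : ℝ) : ℂ) := by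
    have h1 : ((π : ℂ) / (1/2)) = ((2 * π : ℝ) : ℂ) := by push_cast; ring
    have h2 : ((n : ℂ) / 2) = (((n : ℝ) / 2 : ℝ) : ℂ) := by push_cast; ring
    have h3 : (R : ℂ) ^ 2 * (‖w‖ : ℂ) ^ 2 / (4 * (1/2)) = ((R ^ 2 * ‖w‖ ^ 2 / 2 : ℝ) : ℂ) := by
      push_cast; ring
    rw [h1, h2, h3, ← Complex.ofReal_cpow (by positivity), Complex.ofReal_mul, Complex.ofReal_exp]
  rw [hrhs] at h
  have hLI := (Complex.ofRealLI.integral_comp_comm (μ := (volume : Measure (EuclideanSpace ℝ (Fin n))))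
      (fun x : EuclideanSpace ℝ (Fin n) => rexp (R * ⟪w, x⟫ - ‖x‖ ^ 2 / 2))).symm
  apply Complex.ofReal_injective
  exact hLI.trans h

lemma integrable_gauss : Integrable (fun x : EuclideanSpace ℝ (Fin n) => rexp (-‖x‖ ^ 2 / 2)) := by
  refine (integrable_tilt (n := n) 0 0).congr (Filter.Eventually.of_forall fun v => ?_)
  norm_num [neg_div]

lemma integral_gauss :
    ∫ x : EuclideanSpace ℝ (Fin n), rexp (-‖x‖ ^ 2 / 2) = (2 * π) ^ ((n : ℝ) / 2) := by
  have h := integral_tilt (n := n) 0 0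
  norm_num at h
  rw [← h]
  congr 1 with x
  rw [neg_div]

lemma integrable_gauss4 :
    Integrable (fun x : EuclideanSpace ℝ (Fin n) => rexp (-‖x‖ ^ 2 / 4)) := by
  have h := (GaussianFourier.integrable_cexp_neg_mul_sq_norm_add
      (V := EuclideanSpace ℝ (Fin n)) (b := (1/4 : ℂ)) (by norm_num) 0 (0 : EuclideanSpace ℝ (Fin n))).re
  refine h.congr (Filter.Eventually.of_forall fun v => ?_)
  have harg : -(1/4 : ℂ) * (‖v‖ : ℂ) ^ 2 + (0 : ℂ) * ((⟪(0 : EuclideanSpace ℝ (Fin n)), v⟫ : ℝ) : ℂ) =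
      ((-‖v‖ ^ 2 / 4 : ℝ) : ℂ) := by push_cast; ring
  simp only [harg, ← Complex.ofReal_exp, Complex.ofReal_re, RCLike.re_to_complex]

lemma integrable_gauss_smul :
    Integrable (fun x : EuclideanSpace ℝ (Fin n) => rexp (-‖x‖ ^ 2 / 2) • x) := by
  refine Integrable.mono' (integrable_gauss4 (n := n)) ?_ (Filter.Eventually.of_forall fun x => ?_)
  · apply Continuous.aestronglyMeasurable
    fun_prop
  · rw [norm_smul, Real.norm_eq_abs, abs_of_pos (exp_pos _)]
    have h1 : ‖x‖ ≤ rexp (‖x‖ ^ 2 / 4) := by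
      nlinarith [Real.add_one_le_exp (‖x‖ ^ 2 / 4), sq_nonneg (‖x‖ / 2 - 1)]
    calc rexp (-‖x‖ ^ 2 / 2) * ‖x‖ ≤ rexp (-‖x‖ ^ 2 / 2) * rexp (‖x‖ ^ 2 / 4) :=
          mul_le_mul_of_nonneg_left h1 (exp_nonneg _)
      _ = rexp (-‖x‖ ^ 2 / 4) := by rw [← Real.exp_add]; ring_nf

lemma gaussVol_nonneg (E : Set (EuclideanSpace ℝ (Fin n))) : 0 ≤ gaussVol E := by
  have h1 : (0:ℝ) < (2 * π) ^ (-(n : ℝ) / 2) := Real.rpow_pos_of_pos (by positivity) _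
  have h2 : 0 ≤ ∫ x in E, rexp (-‖x‖ ^ 2 / 2) := integral_nonneg fun x => (exp_nonneg _)
  exact mul_nonneg h1.le h2

lemma key (E : Set (EuclideanSpace ℝ (Fin n))) (hE : MeasurableSet E) {R : ℝ} (hR : 1 ≤ R) :
    ‖gaussBary E‖ ≤ R * gaussVol E + R * rexp (-R ^ 2 / 2) := by
  have hR0 : (0:ℝ) < R := lt_of_lt_of_le one_pos hR
  set c : ℝ := (2 * π) ^ (-(n : ℝ) / 2) with hc
  have hcpos : 0 < c := Real.rpow_pos_of_pos (by positivity) _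
  set m : ℝ := ∫ x in E, rexp (-‖x‖ ^ 2 / 2) with hm
  have hm0 : 0 ≤ m := integral_nonneg fun x => (exp_nonneg _)
  set I : EuclideanSpace ℝ (Fin n) := ∫ x in E, rexp (-‖x‖ ^ 2 / 2) • x with hI
  have hbary : ‖gaussBary E‖ = c * ‖I‖ := by
    rw [gaussBary, norm_smul, Real.norm_eq_abs, abs_of_pos hcpos]
  have hvol : gaussVol E = c * m := rfl
  have hone : c * (2 * π) ^ ((n : ℝ) / 2) = 1 := by
    rw [hc, ← Real.rpow_add (by positivity)]
    rw [show -(n:ℝ) / 2 + (n:ℝ) / 2 = 0 by ring, Real.rpow_zero]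
  have hmain : ‖I‖ ≤ R * m + R * rexp (-R ^ 2 / 2) * (2 * π) ^ ((n : ℝ) / 2) := by
    rcases eq_or_ne I 0 with h0 | h0
    · rw [h0, norm_zero]
      positivity
    · set e : EuclideanSpace ℝ (Fin n) := ‖I‖⁻¹ • I with he
      have hne : ‖e‖ = 1 := norm_smul_inv_norm h0
      have hnz : ‖I‖ ≠ 0 := norm_ne_zero_iff.mpr h0
      have hIe : ‖I‖ = ⟪e, I⟫ := by
        rw [he, real_inner_smul_left, real_inner_self_eq_norm_sq, pow_two, ← mul_assoc,
          inv_mul_cancel₀ hnz, one_mul]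
      have hint : IntegrableOn (fun x => rexp (-‖x‖ ^ 2 / 2) • x) E :=
        (integrable_gauss_smul (n := n)).integrableOn
      set g : EuclideanSpace ℝ (Fin n) → ℝ := fun x => rexp (-‖x‖ ^ 2 / 2) * ⟪e, x⟫ with hg
      have hsplit : ⟪e, I⟫ = ∫ x in E, g x := by
        rw [hI, ← integral_inner hint e]
        simp only [hg, real_inner_smul_right]
      have hgint : Integrable g := by
        refine ((integrable_gauss_smul (n := n)).const_inner e).congr
          (Filter.Eventually.of_forall fun x => ?_)
        simp only [hg, real_inner_smul_right]
      set A : Set (EuclideanSpace ℝ (Fin n)) := {x | ⟪e, x⟫ ≤ R} with hA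
      have hAm : MeasurableSet A := by
        have hcont : Continuous fun x : EuclideanSpace ℝ (Fin n) => ⟪e, x⟫ :=
          continuous_const.inner continuous_id
        exact measurableSet_le hcont.measurable measurable_const
      have hsplit2 : ∫ x in E, g x = (∫ x in E ∩ A, g x) + ∫ x in E \ A, g x :=
        (integral_inter_add_diff hAm hgint.integrableOn).symm
      have hp1 : ∫ x in E ∩ A, g x ≤ R * m := by
        have step1 : ∫ x in E ∩ A, g x ≤ ∫ x in E ∩ A, R * rexp (-‖x‖ ^ 2 / 2) := by
          refine setIntegral_mono_on hgint.integrableOn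
            ((integrable_gauss.const_mul R).integrableOn) (hE.inter hAm) fun x hx => ?_
          have ht : ⟪e, x⟫ ≤ R := hx.2
          calc g x ≤ rexp (-‖x‖ ^ 2 / 2) * R :=
                mul_le_mul_of_nonneg_left ht (exp_nonneg _)
            _ = R * rexp (-‖x‖ ^ 2 / 2) := mul_comm _ _
        have step2 : ∫ x in E ∩ A, R * rexp (-‖x‖ ^ 2 / 2) ≤ ∫ x in E, R * rexp (-‖x‖ ^ 2 / 2) :=
          setIntegral_mono_set (integrable_gauss.const_mul R).integrableOn
            (Filter.Eventually.of_forall fun x => by positivity)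
            (HasSubset.Subset.eventuallyLE Set.inter_subset_left)
        calc ∫ x in E ∩ A, g x ≤ _ := step1
          _ ≤ ∫ x in E, R * rexp (-‖x‖ ^ 2 / 2) := step2
          _ = R * m := by rw [integral_const_mul]
      set h : EuclideanSpace ℝ (Fin n) → ℝ :=
        fun x => R * rexp (-R ^ 2) * rexp (R * ⟪e, x⟫ - ‖x‖ ^ 2 / 2) with hh
      have hhint : Integrable h := (integrable_tilt R e).const_mul _
      have hp2 : ∫ x in E \ A, g x ≤ R * rexp (-R ^ 2 / 2) * (2 * π) ^ ((n : ℝ) / 2) := by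
        have step1 : ∫ x in E \ A, g x ≤ ∫ x in E \ A, h x := by
          refine setIntegral_mono_on hgint.integrableOn hhint.integrableOn
            (hE.diff hAm) fun x hx => ?_
          have ht : R < ⟪e, x⟫ := not_le.1 hx.2
          have hkey : ⟪e, x⟫ ≤ R * rexp (R * (⟪e, x⟫ - R)) := by
            have hexp := Real.add_one_le_exp (R * (⟪e, x⟫ - R))
            nlinarith [mul_nonneg (mul_nonneg (sub_nonneg.2 hR) (sub_nonneg.2 hR))
              (sub_pos.2 ht).le]
          calc g x ≤ rexp (-‖x‖ ^ 2 / 2) * (R * rexp (R * (⟪e, x⟫ - R))) :=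
                mul_le_mul_of_nonneg_left hkey (exp_nonneg _)
            _ = R * rexp (-‖x‖ ^ 2 / 2 + R * (⟪e, x⟫ - R)) := by rw [Real.exp_add]; ring
            _ = R * rexp (-R ^ 2 + (R * ⟪e, x⟫ - ‖x‖ ^ 2 / 2)) := by congr 1; ring
            _ = h x := by rw [Real.exp_add, ← mul_assoc]
        have step2 : ∫ x in E \ A, h x ≤ ∫ x, h x :=
          setIntegral_le_integral hhint (Filter.Eventually.of_forall fun x => by positivity)
        have step3 : ∫ x, h x = R * rexp (-R ^ 2 / 2) * (2 * π) ^ ((n : ℝ) / 2) := by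
          simp only [hh]
          rw [integral_const_mul, integral_tilt, hne]
          have hcomb : rexp (-R ^ 2) * rexp (R ^ 2 * 1 ^ 2 / 2) = rexp (-R ^ 2 / 2) := by
            rw [← Real.exp_add]; congr 1; ring
          calc R * rexp (-R ^ 2) * ((2 * π) ^ ((n : ℝ) / 2) * rexp (R ^ 2 * 1 ^ 2 / 2))
              = rexp (-R ^ 2) * rexp (R ^ 2 * 1 ^ 2 / 2) * (R * (2 * π) ^ ((n : ℝ) / 2)) := by ring
            _ = rexp (-R ^ 2 / 2) * (R * (2 * π) ^ ((n : ℝ) / 2)) := by rw [hcomb]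
            _ = R * rexp (-R ^ 2 / 2) * (2 * π) ^ ((n : ℝ) / 2) := by ring
        calc ∫ x in E \ A, g x ≤ _ := step1
          _ ≤ ∫ x, h x := step2
          _ = _ := step3
      calc ‖I‖ = ∫ x in E, g x := hIe.trans hsplit
        _ = (∫ x in E ∩ A, g x) + ∫ x in E \ A, g x := hsplit2
        _ ≤ R * m + R * rexp (-R ^ 2 / 2) * (2 * π) ^ ((n : ℝ) / 2) := add_le_add hp1 hp2
  calc ‖gaussBary E‖ = c * ‖I‖ := hbary
    _ ≤ c * (R * m + R * rexp (-R ^ 2 / 2) * (2 * π) ^ ((n : ℝ) / 2)) :=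
        mul_le_mul_of_nonneg_left hmain hcpos.le
    _ = R * (c * m) + R * rexp (-R ^ 2 / 2) * (c * (2 * π) ^ ((n : ℝ) / 2)) := by ring
    _ = R * gaussVol E + R * rexp (-R ^ 2 / 2) := by rw [hone, hvol, mul_one]

lemma exp_four_ge : (54:ℝ) ≤ rexp 4 := by
  have h := Real.exp_one_gt_d9
  have h4 : rexp 4 = rexp 1 ^ 4 := by
    rw [show (4:ℝ) = ((4:ℕ):ℝ) by norm_num, ← Real.exp_one_pow]
  rw [h4]
  have h2 : (7.389:ℝ) ≤ rexp 1 ^ 2 := by nlinarith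
  nlinarith

lemma arith {ρ m : ℝ} (hρ : 0 ≤ ρ) (hm : 0 ≤ m)
    (h : ∀ R : ℝ, 1 ≤ R → ρ ≤ R * m + R * rexp (-R ^ 2 / 2)) :
    Phi ρ ≤ (2 * rexp 4) * m := by
  have hden1 : (1:ℝ) ≤ 1 + Real.sqrt |Real.log ρ| :=
    le_add_of_nonneg_right (Real.sqrt_nonneg _)
  rcases eq_or_lt_of_le hρ with h0 | hρpos
  · rw [Phi, ← h0, zero_div]
    positivity
  rcases eq_or_lt_of_le hm with hm0 | hmpos
  · exfalso
    set R : ℝ := max 4 (1 - Real.log ρ) with hRdef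
    have hR4 : (4:ℝ) ≤ R := le_max_left _ _
    have hR1 : (1:ℝ) ≤ R := by linarith
    have hRlog : 1 - Real.log ρ ≤ R := le_max_right _ _
    have hρle := h R hR1
    rw [← hm0, mul_zero, zero_add] at hρle
    have h1 : R * rexp (-R ^ 2 / 2) ≤ rexp R * rexp (-R ^ 2 / 2) := by
      have := Real.add_one_le_exp R
      exact mul_le_mul_of_nonneg_right (by linarith) (exp_nonneg _)
    have h2 : rexp R * rexp (-R ^ 2 / 2) = rexp (R - R ^ 2 / 2) := by
      rw [← Real.exp_add]; ring_nf
    have h3 : rexp (R - R ^ 2 / 2) ≤ rexp (-R) := by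
      apply Real.exp_le_exp.2
      nlinarith
    have h4 : rexp (-R) ≤ rexp (Real.log ρ - 1) := by
      apply Real.exp_le_exp.2
      linarith
    have h5 : rexp (Real.log ρ - 1) < ρ := by
      rw [Real.exp_sub, Real.exp_log hρpos]
      have he1 : (1:ℝ) < rexp 1 := by
        have := Real.exp_one_gt_d9; linarith
      exact div_lt_self hρpos he1
    linarith
  · rcases le_or_gt (rexp (-4)) m with hbig | hsmall
    · -- big m case
      have h1 := h 1 le_rfl
      have hexp1 : rexp (-(1:ℝ) ^ 2 / 2) ≤ 1 := by
        rw [Real.exp_le_one_iff]; norm_num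
      have hρle : ρ ≤ m + 1 := by nlinarith
      have hPhi : Phi ρ ≤ ρ := by
        rw [Phi]
        exact div_le_self hρ hden1
      have h14 : (1:ℝ) ≤ rexp 4 * m := by
        have : rexp 4 * rexp (-4) ≤ rexp 4 * m :=
          mul_le_mul_of_nonneg_left hbig (exp_nonneg _)
        rwa [← Real.exp_add, show (4:ℝ) + -4 = 0 by ring, Real.exp_zero] at this
      have he4 : (1:ℝ) ≤ rexp 4 := by
        rw [show (1:ℝ) = rexp 0 by rw [Real.exp_zero]]
        exact Real.exp_le_exp.2 (by norm_num)
      calc Phi ρ ≤ ρ := hPhi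
        _ ≤ m + 1 := hρle
        _ ≤ m + rexp 4 * m := by linarith
        _ ≤ (2 * rexp 4) * m := by nlinarith
    · -- small m case
      have hlogm : Real.log m < -4 := by
        have := Real.log_lt_log hmpos hsmall
        rwa [Real.log_exp] at this
      set L : ℝ := -Real.log m with hLdef
      have hL4 : 4 < L := by simp only [hLdef]; linarith
      have hmL : m = rexp (-L) := by
        rw [hLdef, neg_neg, Real.exp_log hmpos]
      set R : ℝ := Real.sqrt (2 * L) with hRdef
      have hR0 : 0 ≤ R := Real.sqrt_nonneg _
      have hRsq : R ^ 2 = 2 * L := Real.sq_sqrt (by linarith)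
      have hR1 : 1 ≤ R := by nlinarith
      have hexpR : rexp (-R ^ 2 / 2) = m := by
        rw [hRsq, show -(2 * L) / 2 = -L by ring, ← hmL]
      have hρ2 : ρ ≤ 2 * R * m := by
        have := h R hR1
        rw [hexpR] at this
        linarith
      -- 8 L ≤ exp L
      have h8L : 8 * L ≤ rexp L := by
        calc 8 * L ≤ 54 * (L - 4 + 1) := by linarith
          _ ≤ rexp 4 * (L - 4 + 1) := by nlinarith [exp_four_ge]
          _ ≤ rexp 4 * rexp (L - 4) :=
              mul_le_mul_of_nonneg_left (Real.add_one_le_exp _) (exp_nonneg _)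
          _ = rexp L := by rw [← Real.exp_add]; ring_nf
      -- 2 R √m ≤ 1
      have hsqm_sq : Real.sqrt m ^ 2 = m := Real.sq_sqrt hm
      have hsq_nonneg : 0 ≤ Real.sqrt m := Real.sqrt_nonneg _
      have hprod : (2 * R * Real.sqrt m) ^ 2 ≤ 1 := by
        have h1 : (2 * R * Real.sqrt m) ^ 2 = 8 * L * m := by
          rw [mul_pow, mul_pow, hRsq, hsqm_sq]; ring
        rw [h1, hmL]
        have h2 : 8 * L * rexp (-L) ≤ rexp L * rexp (-L) :=
          mul_le_mul_of_nonneg_right h8L (exp_nonneg _)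
        rwa [← Real.exp_add, add_neg_cancel, Real.exp_zero] at h2
      have h2R : 2 * R * Real.sqrt m ≤ 1 := by
        nlinarith [mul_nonneg (mul_nonneg (by norm_num : (0:ℝ) ≤ 2) hR0) hsq_nonneg]
      have hρsqm : ρ ≤ Real.sqrt m := by
        calc ρ ≤ 2 * R * m := hρ2
          _ = (2 * R * Real.sqrt m) * Real.sqrt m := by
              conv_lhs => rw [← Real.mul_self_sqrt hm]
              ring
          _ ≤ 1 * Real.sqrt m := mul_le_mul_of_nonneg_right h2R hsq_nonneg
          _ = Real.sqrt m := one_mul _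
      have hsqm_exp : Real.sqrt m = rexp (-(L / 2)) := by
        rw [hmL, show -L = -(L/2) + -(L/2) by ring, Real.exp_add, Real.sqrt_mul_self (exp_nonneg _)]
      have hlogρ : Real.log ρ ≤ -(L / 2) := by
        calc Real.log ρ ≤ Real.log (Real.sqrt m) := Real.log_le_log hρpos hρsqm
          _ = -(L / 2) := by rw [hsqm_exp, Real.log_exp]
      have habs : L / 2 ≤ |Real.log ρ| := le_abs.2 (Or.inr (by linarith))
      have hsqrtL : Real.sqrt (L / 2) ≤ Real.sqrt |Real.log ρ| := Real.sqrt_le_sqrt habs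
      have hsqrtLpos : 0 < Real.sqrt (L / 2) := Real.sqrt_pos.2 (by linarith)
      have hRL : R = 2 * Real.sqrt (L / 2) := by
        rw [hRdef, show 2 * L = 4 * (L / 2) by ring, Real.sqrt_mul (by norm_num : (0:ℝ) ≤ 4),
          show (4:ℝ) = 2 ^ 2 by norm_num, Real.sqrt_sq (by norm_num : (0:ℝ) ≤ 2)]
      have hPhi2 : Phi ρ ≤ ρ / Real.sqrt (L / 2) := by
        rw [Phi]
        exact div_le_div_of_nonneg_left hρ hsqrtLpos (by linarith)
      have hfin : ρ / Real.sqrt (L / 2) ≤ 4 * m := by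
        rw [div_le_iff₀ hsqrtLpos]
        calc ρ ≤ 2 * R * m := hρ2
          _ = 4 * m * Real.sqrt (L / 2) := by rw [hRL]; ring
      have he4 : (2:ℝ) ≤ rexp 4 := by linarith [exp_four_ge]
      calc Phi ρ ≤ ρ / Real.sqrt (L / 2) := hPhi2
        _ ≤ 4 * m := hfin
        _ ≤ (2 * rexp 4) * m := by nlinarith

theorem Phi_barycenter_le_gaussVol :
    ∃ C > 0, ∀ (n : ℕ) (E : Set (EuclideanSpace ℝ (Fin n))), MeasurableSet E →
      Phi ‖gaussBary E‖ ≤ C * gaussVol E := by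
  refine ⟨2 * rexp 4, by positivity, fun n E hE => ?_⟩
  exact arith (norm_nonneg _) (gaussVol_nonneg E) (fun R hR => key E hE hR)
end

section
/- Let T > 1 and let ε(T) > 0 be defined by ∫_T^{∞} e^{-t²/2} dt = ∫_{-1}^{-1+ε(T)} e^{-t²/2} dt. Then for T sufficiently large: (i) e^{-T²/2} ≥ T·(e^{-(ε(T)-1)²/2} − e^{-1/2}); (ii) e^{-T²/2} ≤ 4T·(e^{-(ε(T)-1)²/2} − e^{-1/2}); and consequently there is c > 0 with c·T·ε(T) ≥ e^{-T²/2} ≥ e^{-T²} and ε(T) → 0 as T → ∞. -/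
open MeasureTheory Real Filter

open Set

private lemma gcont : Continuous fun t : ℝ => Real.exp (-t ^ 2 / 2) := by fun_prop

private lemma gint : Integrable fun t : ℝ => Real.exp (-t ^ 2 / 2) := by
  have h := integrable_exp_neg_mul_sq (show (0:ℝ) < 1/2 by norm_num)
  convert h using 2 with t
  ring

private lemma tgint : Integrable fun t : ℝ => t * Real.exp (-t ^ 2 / 2) := by
  have h := integrable_mul_exp_neg_mul_sq (show (0:ℝ) < 1/2 by norm_num)
  convert h using 2 with t
  ring_nf

private lemma hasDeriv_g (x : ℝ) : HasDerivAt (fun t : ℝ => Real.exp (-t ^ 2 / 2))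
    (-x * Real.exp (-x ^ 2 / 2)) x := by
  have h : HasDerivAt (fun t : ℝ => -t ^ 2 / 2) (-x) x := by
    have := ((hasDerivAt_pow 2 x).neg).div_const 2
    exact this.congr_deriv (by norm_num; ring)
  have := h.exp
  convert this using 1; ring

private lemma tendsto_gauss_zero :
    Tendsto (fun t : ℝ => Real.exp (-t ^ 2 / 2)) atTop (nhds 0) := by
  apply Real.tendsto_exp_atBot.comp
  have h1 : Tendsto (fun t : ℝ => t ^ 2) atTop atTop :=
    tendsto_pow_atTop two_ne_zero
  have h2 : Tendsto (fun t : ℝ => t ^ 2 / 2) atTop atTop :=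
    h1.atTop_div_const (by norm_num)
  simpa [neg_div] using tendsto_neg_atBot_iff.mpr h2

private lemma tail_int_t (T : ℝ) :
    ∫ t in Ioi T, t * Real.exp (-t ^ 2 / 2) = Real.exp (-T ^ 2 / 2) := by
  have hd : ∀ x ∈ Ioi T, HasDerivAt (fun t : ℝ => -Real.exp (-t ^ 2 / 2))
      (x * Real.exp (-x ^ 2 / 2)) x := by
    intro x _
    have := (hasDeriv_g x).neg
    exact this.congr_deriv (by ring)
  have htend : Tendsto (fun t : ℝ => -Real.exp (-t ^ 2 / 2)) atTop (nhds 0) := by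
    simpa using tendsto_gauss_zero.neg
  have h := integral_Ioi_of_hasDerivAt_of_tendsto
    (gcont.neg.continuousWithinAt) hd tgint.integrableOn htend
  rw [h]; simp only [Pi.neg_apply]; ring

private lemma tail_upper (T : ℝ) (hT : 1 ≤ T) :
    ∫ t in Ioi T, Real.exp (-t ^ 2 / 2) ≤ Real.exp (-T ^ 2 / 2) / T := by
  have hT0 : (0:ℝ) < T := by linarith
  have h1 : ∫ t in Ioi T, Real.exp (-t ^ 2 / 2)
      ≤ ∫ t in Ioi T, (t * Real.exp (-t ^ 2 / 2)) / T := by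
    apply setIntegral_mono_on gint.integrableOn (tgint.integrableOn.div_const T)
      measurableSet_Ioi
    intro x hx
    rw [le_div_iff₀ hT0]
    have : Real.exp (-x ^ 2 / 2) * T ≤ Real.exp (-x ^ 2 / 2) * x := by
      apply mul_le_mul_of_nonneg_left (le_of_lt hx) (Real.exp_pos _).le
    linarith [this]
  rw [integral_div, tail_int_t T] at h1
  exact h1

private lemma hasDeriv_F (x : ℝ) (hx : x ≠ 0) :
    HasDerivAt (fun t : ℝ => -((1/t - 1/t^3) * Real.exp (-t ^ 2 / 2)))
      ((1 - 3/x^4) * Real.exp (-x ^ 2 / 2)) x := by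
  have ha : HasDerivAt (fun t : ℝ => 1/t) (-(1/x^2)) x := by
    simpa [one_div] using hasDerivAt_inv hx
  have hb : HasDerivAt (fun t : ℝ => 1/t^3) (-(3/x^4)) x := by
    have h3 : HasDerivAt (fun t : ℝ => t^3) (3 * x ^ 2) x := by
      simpa using hasDerivAt_pow 3 x
    have := h3.inv (pow_ne_zero 3 hx)
    simp only [one_div]
    exact this.congr_deriv (by field_simp)
  have hu : HasDerivAt (fun t : ℝ => 1/t - 1/t^3) (-(1/x^2) - -(3/x^4)) x := ha.sub hb
  have := (hu.mul (hasDeriv_g x)).neg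
  exact this.congr_deriv (by field_simp; ring)

private lemma tail_lower (T : ℝ) (hT : 1 ≤ T) :
    (1/T - 1/T^3) * Real.exp (-T ^ 2 / 2) ≤ ∫ t in Ioi T, Real.exp (-t ^ 2 / 2) := by
  have hT0 : (0:ℝ) < T := by linarith
  have hmeas : AEStronglyMeasurable (fun x : ℝ => (1 - 3/x^4) * Real.exp (-x ^ 2 / 2))
      (volume.restrict (Ioi T)) := by
    apply ContinuousOn.aestronglyMeasurable _ measurableSet_Ioi
    apply ContinuousOn.mul _ gcont.continuousOn
    apply ContinuousOn.sub continuousOn_const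
    apply ContinuousOn.div continuousOn_const (by fun_prop)
    intro x hx
    have : (0:ℝ) < x := lt_trans hT0 hx
    positivity
  have hint : IntegrableOn (fun x : ℝ => (1 - 3/x^4) * Real.exp (-x ^ 2 / 2)) (Ioi T) := by
    apply Integrable.mono (gint.integrableOn.const_mul 4) hmeas
    filter_upwards [ae_restrict_mem measurableSet_Ioi] with x hx
    have hx1 : (1:ℝ) < x := lt_of_le_of_lt hT hx
    have h2 : (1:ℝ) ≤ x^2 := by nlinarith
    have h4 : (1:ℝ) ≤ x^4 := by nlinarith [sq_nonneg (x^2)]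
    have h30 : (0:ℝ) ≤ 3/x^4 := by positivity
    have h34 : 3/x^4 ≤ 3 := by
      rw [div_le_iff₀ (by positivity)]; nlinarith
    rw [Real.norm_eq_abs, Real.norm_eq_abs, abs_mul, abs_mul,
      abs_of_pos (Real.exp_pos _), abs_of_pos (show (0:ℝ) < 4 by norm_num)]
    apply mul_le_mul_of_nonneg_right _ (Real.exp_pos _).le
    rw [abs_le]; constructor <;> nlinarith
  have hd : ∀ x ∈ Ioi T, HasDerivAt (fun t : ℝ => -((1/t - 1/t^3) * Real.exp (-t ^ 2 / 2)))
      ((1 - 3/x^4) * Real.exp (-x ^ 2 / 2)) x := fun x hx =>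
    hasDeriv_F x (by have : (0:ℝ) < x := lt_trans hT0 hx; exact this.ne')
  have htend : Tendsto (fun t : ℝ => -((1/t - 1/t^3) * Real.exp (-t ^ 2 / 2))) atTop (nhds 0) := by
    have h1 : Tendsto (fun t : ℝ => 1/t - 1/t^3) atTop (nhds 0) := by
      have ha : Tendsto (fun t : ℝ => 1/t) atTop (nhds 0) := by
        simpa [one_div] using tendsto_inv_atTop_zero
      have hb : Tendsto (fun t : ℝ => 1/t^3) atTop (nhds 0) := by
        simp only [one_div]
        exact tendsto_inv_atTop_zero.comp (tendsto_pow_atTop (by norm_num))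
      simpa using ha.sub hb
    simpa using (h1.mul tendsto_gauss_zero).neg
  have hFTC := integral_Ioi_of_hasDerivAt_of_tendsto
    ((hasDeriv_F T hT0.ne').continuousAt.continuousWithinAt) hd hint htend
  have hle : ∫ t in Ioi T, (1 - 3/t^4) * Real.exp (-t ^ 2 / 2)
      ≤ ∫ t in Ioi T, Real.exp (-t ^ 2 / 2) := by
    apply setIntegral_mono_on hint gint.integrableOn measurableSet_Ioi
    intro x hx
    have hx0 : (0:ℝ) < x := lt_trans hT0 hx
    have h30 : (0:ℝ) ≤ 3/x^4 := by positivity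
    nlinarith [Real.exp_pos (-x^2/2)]
  rw [hFTC] at hle
  linarith [hle]

private lemma Ioo_eq_interval (a b : ℝ) (h : a ≤ b) :
    ∫ t in Ioo a b, Real.exp (-t^2/2) = ∫ t in a..b, Real.exp (-t^2/2) := by
  rw [intervalIntegral.integral_of_le h, MeasureTheory.integral_Ioc_eq_integral_Ioo]

private lemma D_eq (a b : ℝ) :
    ∫ t in a..b, -t * Real.exp (-t^2/2) = Real.exp (-b^2/2) - Real.exp (-a^2/2) := by
  apply intervalIntegral.integral_eq_sub_of_hasDerivAt (fun x _ => hasDeriv_g x)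
  exact (by fun_prop : Continuous fun t : ℝ => -t * Real.exp (-t^2/2)).intervalIntegrable a b

set_option maxHeartbeats 1000000 in
/-- Asymptotics for `ε(T)` defined by the mass-balance equation
`∫_T^∞ e^{-t²/2} dt = ∫_{-1}^{-1+ε(T)} e^{-t²/2} dt`. -/
theorem epsT_asymptotics (ε : ℝ → ℝ) (hpos : ∀ T > 1, 0 < ε T)
    (heq : ∀ T > 1, (∫ t in Set.Ioi T, Real.exp (-t ^ 2 / 2))
      = ∫ t in Set.Ioo (-1 : ℝ) (-1 + ε T), Real.exp (-t ^ 2 / 2)) :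
    (∃ T₀ : ℝ, ∀ T ≥ T₀,
      T * (Real.exp (-(ε T - 1) ^ 2 / 2) - Real.exp (-1 / 2)) ≤ Real.exp (-T ^ 2 / 2) ∧
      Real.exp (-T ^ 2 / 2) ≤ 4 * T * (Real.exp (-(ε T - 1) ^ 2 / 2) - Real.exp (-1 / 2))) ∧
    (∃ c > 0, ∃ T₁ : ℝ, ∀ T ≥ T₁,
      Real.exp (-T ^ 2 / 2) ≤ c * T * ε T ∧ Real.exp (-T ^ 2) ≤ Real.exp (-T ^ 2 / 2)) ∧
    Tendsto ε atTop (nhds 0) := by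
  have key : ∀ T : ℝ, 2 ≤ T →
      ((T * (Real.exp (-(ε T - 1) ^ 2 / 2) - Real.exp (-1 / 2)) ≤ Real.exp (-T ^ 2 / 2) ∧
        Real.exp (-T ^ 2 / 2) ≤ 4 * T * (Real.exp (-(ε T - 1) ^ 2 / 2) - Real.exp (-1 / 2))) ∧
       Real.exp (-T ^ 2 / 2) ≤ 2 * T * ε T ∧
       ε T ≤ Real.exp (1/2) * Real.exp (-T ^ 2 / 2)) := by
    intro T hT
    have hT1 : (1:ℝ) < T := by linarith
    have hT0 : (0:ℝ) < T := by linarith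
    have hε : 0 < ε T := hpos T hT1
    have hE := heq T hT1
    have hJub := tail_upper T (by linarith)
    have hJlb := tail_lower T (by linarith)
    -- ε T ≤ 1/2
    have hεhalf : ε T ≤ 1/2 := by
      by_contra hcon
      push_neg at hcon
      have hsub : Ioo (-1:ℝ) (-1/2) ⊆ Ioo (-1) (-1 + ε T) :=
        Ioo_subset_Ioo_right (by linarith)
      have h1 : ∫ t in Ioo (-1:ℝ) (-1/2), Real.exp (-t^2/2)
          ≤ ∫ t in Ioo (-1:ℝ) (-1 + ε T), Real.exp (-t^2/2) :=
        setIntegral_mono_set gint.integrableOn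
          (Eventually.of_forall fun t => (Real.exp_pos _).le)
          (HasSubset.Subset.eventuallyLE hsub)
      have h2 : (1/2) * Real.exp (-1/2) ≤ ∫ t in Ioo (-1:ℝ) (-1/2), Real.exp (-t^2/2) := by
        have hmono : ∀ x ∈ Ioo (-1:ℝ) (-1/2), Real.exp (-1/2) ≤ Real.exp (-x^2/2) := by
          intro x hx
          apply Real.exp_le_exp.mpr
          obtain ⟨hxa, hxb⟩ := hx
          nlinarith
        have := setIntegral_mono_on (integrableOn_const (by
            simp [Real.volume_Ioo])) gint.integrableOn measurableSet_Ioo hmono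
        rwa [setIntegral_const, Real.volume_real_Ioo_of_le (by norm_num), smul_eq_mul,
          show (-1/2 : ℝ) - (-1) = 1/2 by norm_num] at this
      have h4 : Real.exp (-T^2/2)/T ≤ Real.exp (-(2:ℝ))/2 := by
        apply div_le_div₀ (Real.exp_pos _).le (Real.exp_le_exp.mpr (by nlinarith)) (by norm_num)
          (by linarith)
      have h5 : (1/2) * Real.exp (-1/2) ≤ Real.exp (-(2:ℝ))/2 := by
        calc (1/2) * Real.exp (-1/2) ≤ ∫ t in Ioo (-1:ℝ) (-1 + ε T), Real.exp (-t^2/2) :=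
              h2.trans h1
          _ = ∫ t in Ioi T, Real.exp (-t^2/2) := hE.symm
          _ ≤ Real.exp (-T^2/2)/T := hJub
          _ ≤ _ := h4
      have hlt : Real.exp (-(2:ℝ)) < Real.exp (-1/2) := Real.exp_lt_exp.mpr (by norm_num)
      linarith
    -- interval quantities
    have hab : (-1:ℝ) ≤ -1 + ε T := by linarith
    have hD : (∫ t in (-1:ℝ)..(-1 + ε T), -t * Real.exp (-t^2/2))
        = Real.exp (-(ε T - 1)^2/2) - Real.exp (-1/2) := by
      rw [D_eq]
      have e1 : (-1 + ε T)^2 = (ε T - 1)^2 := by ring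
      rw [e1]; norm_num
    have hEq2 : (∫ t in Ioi T, Real.exp (-t^2/2))
        = ∫ t in (-1:ℝ)..(-1 + ε T), Real.exp (-t^2/2) :=
      hE.trans (Ioo_eq_interval _ _ hab)
    have hD_le : Real.exp (-(ε T - 1)^2/2) - Real.exp (-1/2)
        ≤ ∫ t in (-1:ℝ)..(-1 + ε T), Real.exp (-t^2/2) := by
      rw [← hD]
      apply intervalIntegral.integral_mono_on hab
        ((by fun_prop : Continuous fun t : ℝ => -t * Real.exp (-t^2/2)).intervalIntegrable _ _)
        (gcont.intervalIntegrable _ _)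
      intro x hx
      nlinarith [Real.exp_pos (-x^2/2), hx.1]
    have hI_le_2D : (∫ t in (-1:ℝ)..(-1 + ε T), Real.exp (-t^2/2))
        ≤ 2 * (Real.exp (-(ε T - 1)^2/2) - Real.exp (-1/2)) := by
      have h2D : (∫ t in (-1:ℝ)..(-1 + ε T), 2 * (-t * Real.exp (-t^2/2)))
          = 2 * (Real.exp (-(ε T - 1)^2/2) - Real.exp (-1/2)) := by
        rw [intervalIntegral.integral_const_mul, hD]
      rw [← h2D]
      apply intervalIntegral.integral_mono_on hab (gcont.intervalIntegrable _ _)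
        ((by fun_prop : Continuous fun t : ℝ => 2 * (-t * Real.exp (-t^2/2))).intervalIntegrable _ _)
      intro x hx
      have hx2 : x ≤ -1/2 := le_trans hx.2 (by linarith)
      nlinarith [Real.exp_pos (-x^2/2)]
    have hI_le_eps : (∫ t in (-1:ℝ)..(-1 + ε T), Real.exp (-t^2/2)) ≤ ε T := by
      have hone : (∫ t in (-1:ℝ)..(-1 + ε T), (1:ℝ)) = ε T := by
        simp
      have hmono : (∫ t in (-1:ℝ)..(-1 + ε T), Real.exp (-t^2/2))
          ≤ ∫ t in (-1:ℝ)..(-1 + ε T), (1:ℝ) := by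
        apply intervalIntegral.integral_mono_on hab (gcont.intervalIntegrable _ _)
          (intervalIntegrable_const)
        intro x _
        apply Real.exp_le_one_iff.mpr
        nlinarith [sq_nonneg x]
      rwa [hone] at hmono
    have heps_le : ε T * Real.exp (-1/2) ≤ ∫ t in (-1:ℝ)..(-1 + ε T), Real.exp (-t^2/2) := by
      have hone : (∫ t in (-1:ℝ)..(-1 + ε T), Real.exp (-1/2)) = ε T * Real.exp (-1/2) := by
        rw [intervalIntegral.integral_const, smul_eq_mul]
        ring_nf
      have hmono : (∫ t in (-1:ℝ)..(-1 + ε T), Real.exp (-1/2))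
          ≤ ∫ t in (-1:ℝ)..(-1 + ε T), Real.exp (-t^2/2) := by
        apply intervalIntegral.integral_mono_on hab intervalIntegrable_const
          (gcont.intervalIntegrable _ _)
        intro x hx
        apply Real.exp_le_exp.mpr
        obtain ⟨hxa, hxb⟩ := hx
        have hx2 : x ≤ -1/2 := le_trans hxb (by linarith)
        nlinarith
      rwa [hone] at hmono
    -- key inequality 1/(2T) ≤ 1/T - 1/T^3
    have hkey : 1/(2*T) ≤ 1/T - 1/T^3 := by
      have h1 : 1/T^3 ≤ 1/(2*T) :=
        one_div_le_one_div_of_le (by positivity) (by nlinarith)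
      have h2 : 1/T - 1/(2*T) = 1/(2*T) := by
        field_simp
        ring
      linarith
    have hElb : Real.exp (-T^2/2) / (2*T) ≤ ∫ t in (-1:ℝ)..(-1 + ε T), Real.exp (-t^2/2) := by
      rw [← hEq2]
      calc Real.exp (-T^2/2) / (2*T) = (1/(2*T)) * Real.exp (-T^2/2) := by ring
        _ ≤ (1/T - 1/T^3) * Real.exp (-T^2/2) :=
            mul_le_mul_of_nonneg_right hkey (Real.exp_pos _).le
        _ ≤ _ := hJlb
    have hEub : (∫ t in (-1:ℝ)..(-1 + ε T), Real.exp (-t^2/2)) ≤ Real.exp (-T^2/2) / T := by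
      rw [← hEq2]; exact hJub
    refine ⟨⟨?_, ?_⟩, ?_, ?_⟩
    · -- T * D ≤ E
      have h6 : Real.exp (-(ε T - 1)^2/2) - Real.exp (-1/2) ≤ Real.exp (-T^2/2) / T :=
        hD_le.trans hEub
      have h7 := (le_div_iff₀ hT0).mp h6
      nlinarith [h7]
    · -- E ≤ 4 T D
      have h6 : Real.exp (-T^2/2) / (2*T)
          ≤ 2 * (Real.exp (-(ε T - 1)^2/2) - Real.exp (-1/2)) :=
        hElb.trans hI_le_2D
      have h7 := (div_le_iff₀ (by positivity : (0:ℝ) < 2*T)).mp h6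
      nlinarith [h7]
    · -- E ≤ 2 T ε
      have h6 : Real.exp (-T^2/2) / (2*T) ≤ ε T := hElb.trans hI_le_eps
      have h7 := (div_le_iff₀ (by positivity : (0:ℝ) < 2*T)).mp h6
      nlinarith [h7]
    · -- ε ≤ exp(1/2) E
      have h6 : ε T * Real.exp (-1/2) ≤ Real.exp (-T^2/2) := by
        calc ε T * Real.exp (-1/2) ≤ ∫ t in (-1:ℝ)..(-1 + ε T), Real.exp (-t^2/2) := heps_le
          _ ≤ Real.exp (-T^2/2) / T := hEub
          _ ≤ Real.exp (-T^2/2) := div_le_self (Real.exp_pos _).le (by linarith)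
      have h10 := mul_le_mul_of_nonneg_right h6 (Real.exp_pos (1/2)).le
      have h11 : ε T * Real.exp (-1/2) * Real.exp (1/2) = ε T := by
        rw [mul_assoc, ← Real.exp_add]
        norm_num
      rw [h11] at h10
      linarith [mul_comm (Real.exp (-T^2/2)) (Real.exp (1/2))]
  refine ⟨⟨2, fun T hT => (key T hT).1⟩,
    ⟨2, by norm_num, 2, fun T hT => ⟨(key T hT).2.1,
      Real.exp_le_exp.mpr (by nlinarith [sq_nonneg T])⟩⟩, ?_⟩
  apply squeeze_zero' (g := fun T => Real.exp (1/2) * Real.exp (-T^2/2))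
  · filter_upwards [eventually_ge_atTop (2:ℝ)] with T hT
    exact (hpos T (by linarith)).le
  · filter_upwards [eventually_ge_atTop (2:ℝ)] with T hT
    exact (key T hT).2.2
  · simpa using tendsto_gauss_zero.const_mul (Real.exp (1/2))
end
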